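/- In the game of arboricity, suppose during the imagination-strategy update the real-game colouring f_k (with k colours) and imagined colouring f_{k+1} (with k+1 colours) satisfy the invariant that for every c ≤ k, same c-component in f_{k+1} implies same c-component in f_k. If an edge e = xy is legally assigned a colour c ≤ k in both colourings, or is assigned colour k+1 in f_{k+1} and any legal colour in f_k, or is assigned c ≤ k in f_{k+1} while x and y already lie in the same c-component of f_k and e is assigned some other legal colour in f_k, then the invariant still holds after the assignment. -/

import Mathlib

/-- The spanning subgraph of `G` consisting of those edges given colour `c`
by the partial edge-colouring `f`. -/
def colourSub {V : Type} (G : SimpleGraph V) {k : ℕ} (f : Sym2 V → Option (Fin k))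
    (c : Fin k) : SimpleGraph V where
  Adj u v := G.Adj u v ∧ f s(u, v) = some c
  symm.symm u v h := ⟨h.1.symm, by rw [Sym2.eq_swap]; exact h.2⟩
  loopless.irrefl u h := G.loopless.irrefl u h.1

/-- Assigning colour `c` to the uncoloured edge `xy` is a legal move in the game of
arboricity: it creates no monochromatic cycle. -/
def ArbLegal {V : Type} (G : SimpleGraph V) {k : ℕ} (f : Sym2 V → Option (Fin k))
    (x y : V) (c : Fin k) : Prop :=
  G.Adj x y ∧ f s(x, y) = none ∧ ¬ (colourSub G f c).Reachable x y

/-- The invariant of the imagination strategy: for every colour `c ≤ k`, vertices in the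
same `c`-component of the imagined `(k+1)`-colouring `g` are in the same `c`-component
of the real `k`-colouring `f`. -/
def ComponentInvariant {V : Type} (G : SimpleGraph V) {k : ℕ}
    (f : Sym2 V → Option (Fin k)) (g : Sym2 V → Option (Fin (k + 1))) : Prop :=
  ∀ c : Fin k, ∀ u v : V,
    (colourSub G g c.castSucc).Reachable u v → (colourSub G f c).Reachable u v

section aux
variable {V : Type} [DecidableEq V] {G : SimpleGraph V} {k : ℕ}

/-- If the update is at an edge with a different colour, the colour subgraph is unchanged. -/
lemma colourSub_update_ne {f : Sym2 V → Option (Fin k)} {x y : V}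
    (hf : f s(x, y) = none) {c d : Fin k} (hcd : c ≠ d) :
    colourSub G (Function.update f s(x, y) (some c)) d = colourSub G f d := by
  ext u v
  show G.Adj u v ∧ _ = _ ↔ G.Adj u v ∧ _ = _
  rw [Function.update_apply]
  split
  · rename_i h
    rw [h, hf]
    simp [Option.some_inj, hcd]
  · rfl

lemma colourSub_le_update {f : Sym2 V → Option (Fin k)} {x y : V}
    (hf : f s(x, y) = none) (w : Option (Fin k)) (d : Fin k) :
    colourSub G f d ≤ colourSub G (Function.update f s(x, y) w) d := by
  intro u v huv
  refine ⟨huv.1, ?_⟩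
  show Function.update f s(x,y) w s(u,v) = _
  rw [Function.update_apply]
  split
  · rename_i h; have h2 := huv.2; rw [h, hf] at h2; exact absurd h2 (by simp)
  · exact huv.2

lemma adj_colourSub_update {f : Sym2 V → Option (Fin k)} {x y : V} {c d : Fin k} {u v : V}
    (h : (colourSub G (Function.update f s(x, y) (some c)) d).Adj u v) :
    (colourSub G f d).Adj u v ∨ (s(u, v) = s(x, y) ∧ c = d) := by
  obtain ⟨h1, h2⟩ := h
  rw [show (Function.update f s(x,y) (some c)) s(u,v) = _ from Function.update_apply ..] at h2
  split at h2
  · rename_i heq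
    right
    exact ⟨heq, by simpa using h2⟩
  · left; exact ⟨h1, h2⟩

/-- Decomposition of reachability after adding one edge. -/
lemma reachable_update {f : Sym2 V → Option (Fin k)} {x y : V} {c d : Fin k} {u v : V}
    (h : (colourSub G (Function.update f s(x, y) (some c)) d).Reachable u v) :
    (colourSub G f d).Reachable u v ∨
      ((colourSub G f d).Reachable u x ∧ (colourSub G f d).Reachable y v) ∨
      ((colourSub G f d).Reachable u y ∧ (colourSub G f d).Reachable x v) := by
  obtain ⟨p⟩ := h
  induction p with
  | nil => left; rfl
  | cons ha _ ih =>
    rename_i a b w q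
    rcases adj_colourSub_update ha with hab | ⟨he, _⟩
    · rcases ih with h1 | ⟨h1, h2⟩ | ⟨h1, h2⟩
      · left; exact (SimpleGraph.Adj.reachable hab).trans h1
      · right; left; exact ⟨(hab.reachable).trans h1, h2⟩
      · right; right; exact ⟨(hab.reachable).trans h1, h2⟩
    · rw [Sym2.eq_iff] at he
      rcases he with ⟨h3, h4⟩ | ⟨h3, h4⟩ <;> subst h3 <;> subst h4
      · rcases ih with h1 | ⟨h1, h2⟩ | ⟨h1, h2⟩
        · right; left; exact ⟨SimpleGraph.Reachable.refl _, h1⟩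
        · right; left; exact ⟨SimpleGraph.Reachable.refl _, h2⟩
        · left; exact h2
      · rcases ih with h1 | ⟨h1, h2⟩ | ⟨h1, h2⟩
        · right; right; exact ⟨SimpleGraph.Reachable.refl _, h1⟩
        · left; exact h2
        · right; right; exact ⟨SimpleGraph.Reachable.refl _, h2⟩
end aux


/-- The component invariant between the real game colouring `f_k` and
the imagined colouring `f_{k+1}` is preserved by one step of the imagination strategy,
in each of the three cases: (a) an edge `e = xy` is legally given the same colour
`c ≤ k` in both colourings; (b) `e` is given colour `k + 1` in `f_{k+1}` and any legal
colour in `f_k`; (c) `e` is given a colour `c ≤ k` in `f_{k+1}` while `x` and `y`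
already lie in the same `c`-component of `f_k`, and `e` is given some other legal
colour in `f_k`. -/
theorem component_invariant_preserved {V : Type} [DecidableEq V] (G : SimpleGraph V)
    (k : ℕ) (f : Sym2 V → Option (Fin k)) (g : Sym2 V → Option (Fin (k + 1)))
    (hinv : ComponentInvariant G f g)
    (x y : V) (hadj : G.Adj x y) (hf : f s(x, y) = none) (hg : g s(x, y) = none) :
    -- (a) the same colour `c ≤ k` is legally played in both games
    (∀ c : Fin k, ArbLegal G f x y c → ArbLegal G g x y c.castSucc →
      ComponentInvariant G (Function.update f s(x, y) (some c))
        (Function.update g s(x, y) (some c.castSucc)))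
    -- (b) colour `k + 1` is legally played in the imagined game, any legal colour in the real game
    ∧ (∀ c' : Fin k, ArbLegal G g x y (Fin.last k) → ArbLegal G f x y c' →
      ComponentInvariant G (Function.update f s(x, y) (some c'))
        (Function.update g s(x, y) (some (Fin.last k))))
    -- (c) colour `c ≤ k` is legally played in the imagined game, but `x` and `y` are
    -- already in the same `c`-component of the real game, where some other legal
    -- colour `c'` is played
    ∧ (∀ c c' : Fin k, ArbLegal G g x y c.castSucc →
      (colourSub G f c).Reachable x y → ArbLegal G f x y c' →
      ComponentInvariant G (Function.update f s(x, y) (some c'))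
        (Function.update g s(x, y) (some c.castSucc))) := by
  refine ⟨?_, ?_, ?_⟩
  · -- case (a)
    intro c _ _ d u v hr
    by_cases hdc : d = c
    · subst hdc
      have hxy : (colourSub G (Function.update f s(x, y) (some d)) d).Adj x y :=
        ⟨hadj, by simp⟩
      rcases reachable_update hr with h1 | ⟨h1, h2⟩ | ⟨h1, h2⟩
      · exact (hinv d u v h1).mono (colourSub_le_update hf _ d)
      · exact (((hinv d u x h1).mono (colourSub_le_update hf _ d)).trans
          hxy.reachable).trans ((hinv d y v h2).mono (colourSub_le_update hf _ d))
      · exact (((hinv d u y h1).mono (colourSub_le_update hf _ d)).trans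
          hxy.symm.reachable).trans ((hinv d x v h2).mono (colourSub_le_update hf _ d))
    · rw [colourSub_update_ne hg (fun h => hdc (Fin.castSucc_injective k h.symm))] at hr
      exact (hinv d u v hr).mono (colourSub_le_update hf _ d)
  · -- case (b)
    intro c' _ _ d u v hr
    rw [colourSub_update_ne hg (Fin.ne_last_of_lt d.castSucc_lt_last).symm] at hr
    exact (hinv d u v hr).mono (colourSub_le_update hf _ d)
  · -- case (c)
    intro c c' _ hrxy _ d u v hr
    by_cases hdc : d = c
    · subst hdc
      rcases reachable_update hr with h1 | ⟨h1, h2⟩ | ⟨h1, h2⟩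
      · exact (hinv d u v h1).mono (colourSub_le_update hf _ d)
      · exact (((hinv d u x h1).trans hrxy).trans (hinv d y v h2)).mono
          (colourSub_le_update hf _ d)
      · exact (((hinv d u y h1).trans hrxy.symm).trans (hinv d x v h2)).mono
          (colourSub_le_update hf _ d)
    · rw [colourSub_update_ne hg (fun h => hdc (Fin.castSucc_injective k h.symm))] at hr
      exact (hinv d u v hr).mono (colourSub_le_update hf _ d)
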